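/- arXiv:1903.04273 — 2 statements merged into one kernel-verified Lean document; each statement's English description precedes it below -/
import Mathlib

section
/- There is a problem which admits non-relativized avoidance of 1 cone but does not admit non-relativized avoidance of 2 cones. -/
open Classical in
/-- The characteristic function of a set of naturals. -/
noncomputable def chi (A : Set ℕ) : ℕ → ℕ := fun n => if n ∈ A then 1 else 0

/-- The effective join (Turing join) of two sets of naturals:
`X ⊕ Y = {2n : n ∈ X} ∪ {2n+1 : n ∈ Y}`. -/
def setJoin (A B : Set ℕ) : Set ℕ :=
  {n | (∃ m ∈ A, n = 2 * m) ∨ (∃ m ∈ B, n = 2 * m + 1)}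

/-- The graph of a function `f : ℕ → ℕ`, coded as a set of naturals. -/
def funGraph (f : ℕ → ℕ) : Set ℕ := {m | ∃ n, m = Nat.pair n (f n)}

/-- Partial recursiveness relative to an oracle `g : ℕ → ℕ` (oracle computability). -/
inductive RecursiveInOracle (g : ℕ → ℕ) : (ℕ →. ℕ) → Prop
  | zero : RecursiveInOracle g (pure 0)
  | succ : RecursiveInOracle g Nat.succ
  | left : RecursiveInOracle g fun n => (Nat.unpair n).1
  | right : RecursiveInOracle g fun n => (Nat.unpair n).2
  | oracle : RecursiveInOracle g g
  | pair {f h : ℕ →. ℕ} : RecursiveInOracle g f → RecursiveInOracle g h →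
      RecursiveInOracle g fun n => Nat.pair <$> f n <*> h n
  | comp {f h : ℕ →. ℕ} : RecursiveInOracle g f → RecursiveInOracle g h →
      RecursiveInOracle g fun n => h n >>= f
  | prec {f h : ℕ →. ℕ} : RecursiveInOracle g f → RecursiveInOracle g h →
      RecursiveInOracle g (Nat.unpaired fun a n =>
        n.rec (f a) fun y IH => do {let i ← IH; h (Nat.pair a (Nat.pair y i))})
  | rfind {f : ℕ →. ℕ} : RecursiveInOracle g f →
      RecursiveInOracle g fun a => Nat.rfind fun n => (fun m => m = 0) <$> f (Nat.pair a n)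

/-- Turing reducibility between sets of naturals. -/
noncomputable def TuringRed (A B : Set ℕ) : Prop := RecursiveInOracle (chi B) (chi A)

/-- `A` is `Σ⁰₁(Z)` (i.e. `Z`-c.e.): `A` is the domain of a partial `Z`-computable function. -/
noncomputable def SigmaOneIn (Z A : Set ℕ) : Prop :=
  ∃ f : ℕ →. ℕ, RecursiveInOracle (chi Z) f ∧ A = f.Dom

/-- `g` dominates `f` if `g n ≥ f n` for every `n`. -/
def Dominates (g f : ℕ → ℕ) : Prop := ∀ n, f n ≤ g n

/-- `f` is `Z`-hyperimmune: no `Z`-computable function dominates `f`. -/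
noncomputable def HyperimmuneIn (Z : Set ℕ) (f : ℕ → ℕ) : Prop :=
  ∀ g : ℕ → ℕ, RecursiveInOracle (chi Z) g → ¬ Dominates g f

/-- `A` is `Δ⁰₂(G)`: `A` is limit computable relative to `G`. -/
noncomputable def DeltaTwoIn (G A : Set ℕ) : Prop :=
  ∃ h : ℕ → ℕ, RecursiveInOracle (chi G) h ∧ ∀ x, ∃ s₀, ∀ s ≥ s₀, h (Nat.pair x s) = chi A x

/-- `A` is c.e. (`Σ⁰₁`). -/
noncomputable def CESet (A : Set ℕ) : Prop := SigmaOneIn ∅ A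

/-- `A` is `Δ⁰₂` (limit computable). -/
noncomputable def DeltaTwo (A : Set ℕ) : Prop := DeltaTwoIn ∅ A

/-- `A` is `Z`-immune: `A` is infinite and contains no infinite `Z`-computable subset. -/
noncomputable def ImmuneIn (Z A : Set ℕ) : Prop :=
  A.Infinite ∧ ∀ B : Set ℕ, TuringRed B Z → B.Infinite → ¬ B ⊆ A

/-- `A` is `Z`-hyperimmune as a set: its principal function is `Z`-hyperimmune. -/
noncomputable def HyperimmuneSetIn (Z A : Set ℕ) : Prop :=
  A.Infinite ∧ HyperimmuneIn Z (Nat.nth (· ∈ A))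

/-- Enumeration reducibility, with finite sets coded by binary representation
(`m ∈ D_u ↔ Nat.testBit u m`). -/
noncomputable def EnumRed (B A : Set ℕ) : Prop :=
  ∃ W : Set ℕ, CESet W ∧
    ∀ n, n ∈ B ↔ ∃ u, Nat.pair n u ∈ W ∧ ∀ m, Nat.testBit u m = true → m ∈ A

/-- `B` is cototal: `B ≤ₑ ℕ \ B`. -/
noncomputable def Cototal (B : Set ℕ) : Prop := EnumRed B Bᶜ

/-- `X` is semi-computable: there is a computable selector function. -/
noncomputable def SemiComputable (X : Set ℕ) : Prop :=
  ∃ g : ℕ → ℕ, RecursiveInOracle (chi ∅) g ∧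
    ∀ x y : ℕ, (g (Nat.pair x y) = x ∨ g (Nat.pair x y) = y) ∧
      ((x ∈ X ∨ y ∈ X) → g (Nat.pair x y) ∈ X)

/-- A problem: a set of instances, and a solution relation between instances and solutions.
Instances and solutions are coded by sets of naturals. -/
structure Problem where
  Inst : Set (Set ℕ)
  Sol : Set ℕ → Set ℕ → Prop

/-- `P` admits preservation of `W`. -/
noncomputable def Preserves (P : Problem) (W : Set (Set ℕ)) : Prop :=
  ∀ Z ∈ W, ∀ X ∈ P.Inst, TuringRed X Z → ∃ Y, P.Sol X Y ∧ setJoin Z Y ∈ W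

/-- `P` admits strong preservation of `W`. -/
noncomputable def StronglyPreserves (P : Problem) (W : Set (Set ℕ)) : Prop :=
  ∀ Z ∈ W, ∀ X ∈ P.Inst, ∃ Y, P.Sol X Y ∧ setJoin Z Y ∈ W

/-- `W` is downward closed under Turing reducibility. -/
noncomputable def DownwardClosed (W : Set (Set ℕ)) : Prop :=
  ∀ X ∈ W, ∀ Y : Set ℕ, TuringRed Y X → Y ∈ W

/-- A Turing ideal: closed under effective join and downward closed under `≤_T`. -/
noncomputable def TuringIdeal (S : Set (Set ℕ)) : Prop :=
  (∀ X ∈ S, ∀ Y ∈ S, setJoin X Y ∈ S) ∧ DownwardClosed S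

/-- `P` holds in `S`: every instance of `P` in `S` has a solution in `S`. -/
def HoldsIn (P : Problem) (S : Set (Set ℕ)) : Prop :=
  ∀ X ∈ P.Inst, X ∈ S → ∃ Y, P.Sol X Y ∧ Y ∈ S

/-- `P` admits avoidance of `k` cones (`k ≤ ω`, with `ω` represented by `⊤ : ℕ∞`). -/
noncomputable def AvoidsCones (P : Problem) (k : ℕ∞) : Prop :=
  ∀ Z : Set ℕ, ∀ B : ℕ → Set ℕ, (∀ s : ℕ, (s : ℕ∞) < k → ¬ TuringRed (B s) Z) →
    ∀ X ∈ P.Inst, TuringRed X Z →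
      ∃ Y, P.Sol X Y ∧ ∀ s : ℕ, (s : ℕ∞) < k → ¬ TuringRed (B s) (setJoin Z Y)

/-- `P` admits non-relativized avoidance of `k` cones. -/
noncomputable def NRAvoidsCones (P : Problem) (k : ℕ∞) : Prop :=
  ∀ B : ℕ → Set ℕ, (∀ s : ℕ, (s : ℕ∞) < k → ¬ TuringRed (B s) ∅) →
    ∀ X ∈ P.Inst, TuringRed X ∅ →
      ∃ Y, P.Sol X Y ∧ ∀ s : ℕ, (s : ℕ∞) < k → ¬ TuringRed (B s) Y

/-- `P` admits preservation of `k` non-`Σ⁰₁` definitions. -/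
noncomputable def PreservesNonSigmaOne (P : Problem) (k : ℕ∞) : Prop :=
  ∀ Z : Set ℕ, ∀ B : ℕ → Set ℕ, (∀ s : ℕ, (s : ℕ∞) < k → ¬ SigmaOneIn Z (B s)) →
    ∀ X ∈ P.Inst, TuringRed X Z →
      ∃ Y, P.Sol X Y ∧ ∀ s : ℕ, (s : ℕ∞) < k → ¬ SigmaOneIn (setJoin Z Y) (B s)

/-- `P` admits preservation of `k` hyperimmunities. -/
noncomputable def PreservesHyperimmunities (P : Problem) (k : ℕ∞) : Prop :=
  ∀ Z : Set ℕ, ∀ f : ℕ → (ℕ → ℕ), (∀ s : ℕ, (s : ℕ∞) < k → HyperimmuneIn Z (f s)) →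
    ∀ X ∈ P.Inst, TuringRed X Z →
      ∃ Y, P.Sol X Y ∧ ∀ s : ℕ, (s : ℕ∞) < k → HyperimmuneIn (setJoin Z Y) (f s)

/-- `P` admits preservation of `k` immunities. -/
noncomputable def PreservesImmunities (P : Problem) (k : ℕ∞) : Prop :=
  ∀ Z : Set ℕ, ∀ B : ℕ → Set ℕ, (∀ s : ℕ, (s : ℕ∞) < k → ImmuneIn Z (B s)) →
    ∀ X ∈ P.Inst, TuringRed X Z →
      ∃ Y, P.Sol X Y ∧ ∀ s : ℕ, (s : ℕ∞) < k → ImmuneIn (setJoin Z Y) (B s)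

/-- Coding a point of Cantor space as a function `ℕ → ℕ`. -/
def boolFun (X : ℕ → Bool) : ℕ → ℕ := fun n => cond (X n) 1 0

/-- `F` is a trace of the closed set `C ⊆ 2^ω`: each `F n` is a set of binary strings of
length `n`, one of which is a prefix of a member of `C`. -/
def IsTrace (C : Set (ℕ → Bool)) (F : ℕ → Finset (List Bool)) : Prop :=
  ∀ n, (∀ σ ∈ F n, σ.length = n) ∧ ∃ σ ∈ F n, ∃ X ∈ C, σ = (List.range n).map X

/-- `C ⊆ 2^ω` has a `Z`-computable constant-bound trace. -/
noncomputable def HasCBTraceIn (Z : Set ℕ) (C : Set (ℕ → Bool)) : Prop :=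
  ∃ (F : ℕ → Finset (List Bool)) (k : ℕ), IsTrace C F ∧ (∀ n, (F n).card = k) ∧
    RecursiveInOracle (chi Z) (fun n => Encodable.encode (F n) : ℕ → ℕ)

open Classical in
/-- The real `0.B` with binary expansion given by `B`. -/
noncomputable def realOf (B : Set ℕ) : ℝ :=
  ∑' n : ℕ, if n ∈ B then ((2 : ℝ) ^ (n + 1))⁻¹ else 0

/-- A c.e. set of rationals: the image of a c.e. set of naturals under the
canonical enumeration of `ℚ`. -/
noncomputable def CERatSet (W : Set ℚ) : Prop :=
  ∃ S : Set ℕ, CESet S ∧ W = (fun n => Denumerable.ofNat ℚ n) '' S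



namespace KP


inductive OCode
  | zero | succ | left | right | oracle
  | pair (a b : OCode) | comp (a b : OCode) | prec (a b : OCode) | rfind (a : OCode)

def oeval (g : ℕ →. ℕ) : OCode → ℕ →. ℕ
  | .zero => pure 0
  | .succ => Nat.succ
  | .left => fun n => (Nat.unpair n).1
  | .right => fun n => (Nat.unpair n).2
  | .oracle => g
  | .pair a b => fun n => Nat.pair <$> oeval g a n <*> oeval g b n
  | .comp a b => fun n => oeval g b n >>= oeval g a
  | .prec a b => Nat.unpaired fun x n =>
      n.rec (oeval g a x) fun y IH => do {let i ← IH; oeval g b (Nat.pair x (Nat.pair y i))}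
  | .rfind a => fun n => Nat.rfind fun m => (fun x => x = 0) <$> oeval g a (Nat.pair n m)

theorem recursiveIn_iff {g : ℕ → ℕ} {f : ℕ →. ℕ} :
    RecursiveInOracle g f ↔ ∃ c : OCode, oeval g c = f := by
  constructor
  · intro h
    induction h with
    | zero => exact ⟨.zero, rfl⟩
    | succ => exact ⟨.succ, rfl⟩
    | left => exact ⟨.left, rfl⟩
    | right => exact ⟨.right, rfl⟩
    | oracle => exact ⟨.oracle, rfl⟩
    | pair _ _ ih1 ih2 =>
      obtain ⟨c1, rfl⟩ := ih1; obtain ⟨c2, rfl⟩ := ih2; exact ⟨.pair c1 c2, rfl⟩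
    | comp _ _ ih1 ih2 =>
      obtain ⟨c1, rfl⟩ := ih1; obtain ⟨c2, rfl⟩ := ih2; exact ⟨.comp c1 c2, rfl⟩
    | prec _ _ ih1 ih2 =>
      obtain ⟨c1, rfl⟩ := ih1; obtain ⟨c2, rfl⟩ := ih2; exact ⟨.prec c1 c2, rfl⟩
    | rfind _ ih =>
      obtain ⟨c, rfl⟩ := ih; exact ⟨.rfind c, rfl⟩
  · rintro ⟨c, rfl⟩
    induction c with
    | zero => exact .zero
    | succ => exact .succ
    | left => exact .left
    | right => exact .right
    | oracle => exact .oracle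
    | pair a b iha ihb => exact .pair iha ihb
    | comp a b iha ihb => exact .comp iha ihb
    | prec a b iha ihb => exact .prec iha ihb
    | rfind a iha => exact .rfind iha


theorem oeval_prec_zero (g : ℕ →. ℕ) (a b : OCode) (x : ℕ) :
    oeval g (.prec a b) (Nat.pair x 0) = oeval g a x := by
  simp [oeval, Nat.unpaired]

theorem oeval_prec_succ (g : ℕ →. ℕ) (a b : OCode) (x k : ℕ) :
    oeval g (.prec a b) (Nat.pair x (k+1)) =
      (oeval g (.prec a b) (Nat.pair x k)).bind
        (fun i => oeval g b (Nat.pair x (Nat.pair k i))) := by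
  simp [oeval, Nat.unpaired]


theorem mem_oeval_pair {g : ℕ →. ℕ} {a b : OCode} {n x : ℕ} :
    x ∈ oeval g (.pair a b) n ↔ ∃ p ∈ oeval g a n, ∃ q ∈ oeval g b n, Nat.pair p q = x := by
  simp only [oeval, Seq.seq, Part.bind_eq_bind, Part.map_eq_map, Part.mem_bind_iff,
    Part.mem_map_iff]
  constructor
  · rintro ⟨u, ⟨p, hp, rfl⟩, q, hq, rfl⟩; exact ⟨p, hp, q, hq, rfl⟩
  · rintro ⟨p, hp, q, hq, rfl⟩; exact ⟨_, ⟨p, hp, rfl⟩, q, hq, rfl⟩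

theorem mem_oeval_comp {g : ℕ →. ℕ} {a b : OCode} {n x : ℕ} :
    x ∈ oeval g (.comp a b) n ↔ ∃ v ∈ oeval g b n, x ∈ oeval g a v := by
  simp only [oeval, Part.bind_eq_bind, Part.mem_bind_iff]
  exact Part.mem_bind_iff

theorem mem_oeval_rfind {g : ℕ →. ℕ} {a : OCode} {n x : ℕ} :
    x ∈ oeval g (.rfind a) n ↔
      (∃ v ∈ oeval g a (Nat.pair n x), v = 0) ∧
        ∀ m, m < x → ∃ v ∈ oeval g a (Nat.pair n m), v ≠ 0 := by
  show x ∈ Nat.rfind _ ↔ _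
  refine Nat.mem_rfind.trans ?_
  constructor
  · rintro ⟨h1, h2⟩
    obtain ⟨v, hv, he⟩ := Part.mem_map_iff _ |>.1 h1
    refine ⟨⟨v, hv, by simpa using he⟩, fun m hm => ?_⟩
    obtain ⟨w, hw, he'⟩ := Part.mem_map_iff _ |>.1 (h2 hm)
    exact ⟨w, hw, by simpa using he'⟩
  · rintro ⟨⟨v, hv, he⟩, h2⟩
    refine ⟨Part.mem_map_iff _ |>.2 ⟨v, hv, by simpa using he⟩, fun {m} hm => ?_⟩
    obtain ⟨w, hw, he'⟩ := h2 m hm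
    exact Part.mem_map_iff _ |>.2 ⟨w, hw, by simpa using he'⟩

theorem mem_coe_iff {g : ℕ → ℕ} {n a : ℕ} : a ∈ (g : ℕ →. ℕ) n ↔ a = g n := by
  rw [PFun.coe_val]; exact Part.mem_some_iff

def OracleLE (g₁ g₂ : ℕ →. ℕ) : Prop := ∀ x a, a ∈ g₁ x → a ∈ g₂ x

theorem oeval_mono {g₁ g₂ : ℕ →. ℕ} (H : OracleLE g₁ g₂) :
    ∀ (c : OCode) (n a : ℕ), a ∈ oeval g₁ c n → a ∈ oeval g₂ c n := by
  intro c
  induction c with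
  | zero => exact fun n a h => h
  | succ => exact fun n a h => h
  | left => exact fun n a h => h
  | right => exact fun n a h => h
  | oracle => exact H
  | pair a b iha ihb =>
    intro n x h
    obtain ⟨p, hp, q, hq, rfl⟩ := mem_oeval_pair.1 h
    exact mem_oeval_pair.2 ⟨p, iha _ _ hp, q, ihb _ _ hq, rfl⟩
  | comp a b iha ihb =>
    intro n x h
    obtain ⟨u, hu, hx⟩ := mem_oeval_comp.1 h
    exact mem_oeval_comp.2 ⟨u, ihb _ _ hu, iha _ _ hx⟩
  | prec a b iha ihb =>
    intro n
    have hn : n = Nat.pair (Nat.unpair n).1 (Nat.unpair n).2 := (Nat.pair_unpair n).symm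
    rw [hn]
    generalize (Nat.unpair n).1 = x, (Nat.unpair n).2 = k
    clear hn n
    induction k with
    | zero => intro a' h; rw [oeval_prec_zero] at *; exact iha _ _ h
    | succ k ih =>
      intro a' h
      rw [oeval_prec_succ] at *
      obtain ⟨i, hi, hx⟩ := Part.mem_bind_iff.1 h
      exact Part.mem_bind_iff.2 ⟨i, ih _ hi, ihb _ _ hx⟩
  | rfind a iha =>
    intro n x h
    obtain ⟨⟨v, hv, he⟩, h2⟩ := mem_oeval_rfind.1 h
    refine mem_oeval_rfind.2 ⟨⟨v, iha _ _ hv, he⟩, fun m hm => ?_⟩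
    obtain ⟨w, hw, he'⟩ := h2 m hm
    exact ⟨w, iha _ _ hw, he'⟩

def resO (g : ℕ → ℕ) (u : ℕ) : ℕ →. ℕ := fun x => if x < u then Part.some (g x) else Part.none

theorem resO_le (g : ℕ → ℕ) (u : ℕ) : OracleLE (resO g u) g := by
  intro x a h
  simp only [resO] at h
  split at h
  · exact mem_coe_iff.2 (Part.mem_some_iff.1 h)
  · exact absurd h (Part.notMem_none a)

theorem resO_mono (g : ℕ → ℕ) {u v : ℕ} (huv : u ≤ v) : OracleLE (resO g u) (resO g v) := by
  intro x a h
  simp only [resO] at h ⊢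
  split at h
  · rw [if_pos (lt_of_lt_of_le (by omega) huv)]; exact h
  · exact absurd h (Part.notMem_none a)

-- helper: monotone finite choice
theorem bounded_choice {P : ℕ → ℕ → Prop} (mono : ∀ m {u v}, u ≤ v → P m u → P m v)
    (a : ℕ) (h : ∀ m, m ≤ a → ∃ u, P m u) : ∃ U, ∀ m, m ≤ a → P m U := by
  induction a with
  | zero =>
    obtain ⟨u, hu⟩ := h 0 le_rfl
    exact ⟨u, fun m hm => by interval_cases m; exact hu⟩
  | succ a ih =>
    obtain ⟨U, hU⟩ := ih fun m hm => h m (hm.trans (Nat.le_succ a))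
    obtain ⟨u, hu⟩ := h (a+1) le_rfl
    refine ⟨max U u, fun m hm => ?_⟩
    rcases Nat.lt_or_ge m (a+1) with h' | h'
    · exact mono m (le_max_left _ _) (hU m (by omega))
    · have : m = a + 1 := by omega
      subst this; exact mono _ (le_max_right _ _) hu

theorem oeval_compact (g : ℕ → ℕ) :
    ∀ (c : OCode) (n a : ℕ), a ∈ oeval g c n → ∃ u, a ∈ oeval (resO g u) c n := by
  intro c
  induction c with
  | zero => exact fun n a h => ⟨0, h⟩
  | succ => exact fun n a h => ⟨0, h⟩
  | left => exact fun n a h => ⟨0, h⟩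
  | right => exact fun n a h => ⟨0, h⟩
  | oracle =>
    intro n a h
    refine ⟨n+1, ?_⟩
    have : a = g n := mem_coe_iff.1 h
    subst this
    show g n ∈ resO g (n+1) n
    simp [resO]
  | pair a b iha ihb =>
    intro n x h
    obtain ⟨p, hp, q, hq, rfl⟩ := mem_oeval_pair.1 h
    obtain ⟨u1, h1⟩ := iha _ _ hp
    obtain ⟨u2, h2⟩ := ihb _ _ hq
    refine ⟨max u1 u2, mem_oeval_pair.2 ⟨p, oeval_mono (resO_mono g (le_max_left u1 u2)) _ _ _ h1,
      q, oeval_mono (resO_mono g (le_max_right u1 u2)) _ _ _ h2, rfl⟩⟩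
  | comp a b iha ihb =>
    intro n x h
    obtain ⟨v, hv, hx⟩ := mem_oeval_comp.1 h
    obtain ⟨u1, h1⟩ := ihb _ _ hv
    obtain ⟨u2, h2⟩ := iha _ _ hx
    refine ⟨max u1 u2, mem_oeval_comp.2 ⟨v,
      oeval_mono (resO_mono g (le_max_left u1 u2)) _ _ _ h1,
      oeval_mono (resO_mono g (le_max_right u1 u2)) _ _ _ h2⟩⟩
  | prec a b iha ihb =>
    intro n
    have hn : n = Nat.pair (Nat.unpair n).1 (Nat.unpair n).2 := (Nat.pair_unpair n).symm
    rw [hn]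
    generalize (Nat.unpair n).1 = x, (Nat.unpair n).2 = k
    clear hn n
    induction k with
    | zero => intro a' h; rw [oeval_prec_zero] at h
              obtain ⟨u, hu⟩ := iha _ _ h
              exact ⟨u, by rw [oeval_prec_zero]; exact hu⟩
    | succ k ih =>
      intro a' h
      rw [oeval_prec_succ] at h
      obtain ⟨i, hi, hx⟩ := Part.mem_bind_iff.1 h
      obtain ⟨u1, h1⟩ := ih _ hi
      obtain ⟨u2, h2⟩ := ihb _ _ hx
      refine ⟨max u1 u2, ?_⟩
      rw [oeval_prec_succ]
      exact Part.mem_bind_iff.2 ⟨i, oeval_mono (resO_mono g (le_max_left u1 u2)) _ _ _ h1,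
        oeval_mono (resO_mono g (le_max_right u1 u2)) _ _ _ h2⟩
  | rfind a iha =>
    intro n x h
    obtain ⟨⟨v0, hv0, he0⟩, h2⟩ := mem_oeval_rfind.1 h
    have key : ∀ m, m ≤ x → ∃ u, ∃ v, v ∈ oeval (resO g u) a (Nat.pair n m) ∧
        (if m = x then v = 0 else v ≠ 0) := by
      intro m hm
      rcases Nat.lt_or_ge m x with h' | h'
      · obtain ⟨w, hw, he⟩ := h2 m h'
        obtain ⟨u, hu⟩ := iha _ _ hw
        exact ⟨u, w, hu, by rw [if_neg (Nat.ne_of_lt h')]; exact he⟩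
      · have hmx : m = x := by omega
        subst hmx
        obtain ⟨u, hu⟩ := iha _ _ hv0
        exact ⟨u, v0, hu, by rw [if_pos rfl]; exact he0⟩
    obtain ⟨U, hU⟩ := bounded_choice (P := fun m u => ∃ v,
        v ∈ oeval (resO g u) a (Nat.pair n m) ∧ (if m = x then v = 0 else v ≠ 0))
      (fun m u v huv hyp => by
        obtain ⟨w, hw, he⟩ := hyp
        exact ⟨w, oeval_mono (resO_mono g huv) _ _ _ hw, he⟩) x key
    refine ⟨U, mem_oeval_rfind.2 ⟨?_, fun m hm => ?_⟩⟩
    · obtain ⟨v, hv, he⟩ := hU x le_rfl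
      rw [if_pos rfl] at he
      exact ⟨v, hv, he⟩
    · obtain ⟨v, hv, he⟩ := hU m (le_of_lt hm)
      rw [if_neg (Nat.ne_of_lt hm)] at he
      exact ⟨v, hv, he⟩


def listO (l : List ℕ) : ℕ →. ℕ := fun x => Part.ofOption l[x]?

open Computable Partrec in
set_option maxHeartbeats 1000000 in
theorem oevalL_partrec (c : OCode) :
    Partrec (fun p : List ℕ × ℕ => oeval (listO p.1) c p.2) := by
  induction c with
  | zero => exact Partrec.const' (Part.some 0)
  | succ => exact (Computable.succ.comp Computable.snd).partrec.of_eq fun p => rfl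
  | left =>
    exact ((Computable.fst.comp (Computable.unpair.comp Computable.snd))).partrec.of_eq
      fun p => rfl
  | right =>
    exact ((Computable.snd.comp (Computable.unpair.comp Computable.snd))).partrec.of_eq
      fun p => rfl
  | oracle =>
    exact Computable.ofOption (Computable.list_getElem?.comp Computable.fst Computable.snd)
  | pair a b iha ihb =>
    refine (iha.bind (g := fun (p : List ℕ × ℕ) (x : ℕ) =>
      (oeval (listO p.1) b p.2).map (fun q => Nat.pair x q)) ?_).of_eq fun p => ?_
    · exact ((ihb.comp Computable.fst).map
        ((Primrec₂.natPair.comp (Primrec.snd.comp Primrec.fst) Primrec.snd).to_comp.to₂)).to₂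
    · show _ = Nat.pair <$> _ <*> _
      simp [Seq.seq]
  | comp a b iha ihb =>
    refine (ihb.bind ((iha.comp (((Computable.fst.comp Computable.fst).pair
      Computable.snd))).to₂)).of_eq fun p => ?_
    rfl
  | prec a b iha ihb =>
    refine (Partrec.nat_rec (f := fun p : List ℕ × ℕ => (Nat.unpair p.2).2)
      (g := fun p : List ℕ × ℕ => oeval (listO p.1) a (Nat.unpair p.2).1)
      (h := fun (p : List ℕ × ℕ) (yi : ℕ × ℕ) =>
        oeval (listO p.1) b (Nat.pair (Nat.unpair p.2).1 (Nat.pair yi.1 yi.2)))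
      (Computable.snd.comp (Computable.unpair.comp Computable.snd))
      (iha.comp (Computable.fst.pair
        (Computable.fst.comp (Computable.unpair.comp Computable.snd)))) ?_).of_eq fun p => ?_
    · have hcomp : Computable (fun q : (List ℕ × ℕ) × ℕ × ℕ =>
        Nat.pair (Nat.unpair q.1.2).1 (Nat.pair q.2.1 q.2.2)) :=
        (Primrec₂.natPair.comp
          ((Primrec.fst.comp (Primrec.unpair.comp (Primrec.snd.comp Primrec.fst))))
          (Primrec₂.natPair.comp (Primrec.fst.comp Primrec.snd)
            (Primrec.snd.comp Primrec.snd))).to_comp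
      exact (ihb.comp ((Computable.fst.comp Computable.fst).pair hcomp)).to₂
    · show _ = oeval (listO p.1) (.prec a b) p.2
      simp only [oeval, Nat.unpaired]
      rfl
  | rfind a iha =>
    refine (Partrec.rfind (p := fun (p : List ℕ × ℕ) (m : ℕ) =>
      (fun x => decide (x = 0)) <$> oeval (listO p.1) a (Nat.pair p.2 m)) ?_).of_eq fun p => ?_
    · exact ((iha.comp ((Computable.fst.comp Computable.fst).pair
        (Primrec₂.natPair.comp (Primrec.snd.comp Primrec.fst) Primrec.snd).to_comp)).map
        ((Primrec.eq.comp Primrec.snd (Primrec.const 0)).decide.to_comp.to₂)).to₂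
    · rfl


def ext01 (σ τ : List ℕ) : List ℕ := σ ++ τ.map (fun x => min x 1)

open Nat.Partrec (Code) in
open Nat.Partrec.Code in
set_option maxHeartbeats 1000000 in
theorem search_partrec (c : OCode) (σ : List ℕ) (h : ℕ → ℕ)
    (sound : ∀ (τ : List ℕ) (n a : ℕ), a ∈ oeval (listO (ext01 σ τ)) c n → a = h n)
    (dom : ∀ n, ∃ τ : List ℕ, h n ∈ oeval (listO (ext01 σ τ)) c n) :
    Nat.Partrec (h : ℕ →. ℕ) := by
  classical
  have hm : Computable (fun p : List ℕ × ℕ => (ext01 σ p.1, p.2)) := by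
    have h1 : Primrec (fun p : List ℕ × ℕ => ext01 σ p.1) :=
      (Primrec.list_append.comp (Primrec.const σ)
        (Primrec.list_map Primrec.fst
          ((Primrec.nat_min.comp Primrec.snd (Primrec.const 1)).to₂)))
    exact (h1.pair Primrec.snd).to_comp
  have hH : Partrec (fun p : List ℕ × ℕ => oeval (listO (ext01 σ p.1)) c p.2) :=
    ((oevalL_partrec c).comp hm).of_eq fun p => rfl
  obtain ⟨e, he⟩ := Nat.Partrec.Code.exists_code.1 hH
  set F : ℕ →. ℕ := fun n => Nat.rfindOpt fun k =>
    evaln k.unpair.1 e (Encodable.encode ((Denumerable.ofNat (List ℕ) k.unpair.2), n)) with hF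
  have mem_iff : ∀ {τ : List ℕ} {n a : ℕ},
      a ∈ eval e (Encodable.encode (τ, n)) ↔ a ∈ oeval (listO (ext01 σ τ)) c n := by
    intro τ n a
    rw [he]
    show a ∈ Part.bind _ _ ↔ _
    simp [Encodable.encodek]
  have Fsound : ∀ n a, a ∈ F n → a = h n := by
    intro n a ha
    obtain ⟨k, hk⟩ := Nat.rfindOpt_spec ha
    have := evaln_sound hk
    rw [mem_iff] at this
    exact sound _ _ _ this
  have Fdom : ∀ n, (F n).Dom := by
    intro n
    obtain ⟨τ, hτ⟩ := dom n
    have : h n ∈ eval e (Encodable.encode (τ, n)) := mem_iff.2 hτ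
    obtain ⟨k, hk⟩ := evaln_complete.1 this
    refine Nat.rfindOpt_dom.2 ⟨Nat.pair k (Encodable.encode τ), h n, ?_⟩
    simp only [Nat.unpair_pair, Denumerable.ofNat_encode]
    exact hk
  have hFh : F = (h : ℕ →. ℕ) := by
    funext n
    have hd := Fdom n
    have : (F n).get hd ∈ F n := Part.get_mem hd
    have := Fsound n _ this
    rw [PFun.coe_val]
    exact Part.eq_some_iff.2 (this ▸ Part.get_mem hd)
  have hFpr : Partrec F := by
    rw [hF]
    refine Partrec.rfindOpt ?_
    have hc : Computable fun (p : ℕ × ℕ) =>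
        evaln p.2.unpair.1 e (Encodable.encode ((Denumerable.ofNat (List ℕ) p.2.unpair.2), p.1)) := by
      have hin : Computable (fun p : ℕ × ℕ =>
          ((p.2.unpair.1, e), Encodable.encode (Denumerable.ofNat (List ℕ) p.2.unpair.2, p.1))) := by
        refine Computable.pair (Computable.pair ?_ (Computable.const e)) ?_
        · exact (Primrec.fst.comp (Primrec.unpair.comp Primrec.snd)).to_comp
        · exact (Primrec.encode.comp ((Primrec.pair
            ((Primrec.ofNat (List ℕ)).comp (Primrec.snd.comp (Primrec.unpair.comp Primrec.snd)))
            Primrec.fst))).to_comp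
      exact (Nat.Partrec.Code.primrec_evaln.to_comp.comp hin).of_eq fun p => rfl
    exact hc.to₂
  rw [hFh] at hFpr
  exact Partrec.nat_iff.1 hFpr


def ofNatO : ℕ → OCode
  | 0 => .zero
  | 1 => .succ
  | 2 => .left
  | 3 => .right
  | 4 => .oracle
  | n + 5 =>
    have hm : n / 4 < n + 5 := by omega
    have h1 : (Nat.unpair (n / 4)).1 < n + 5 := lt_of_le_of_lt (Nat.unpair_left_le _) hm
    have h2 : (Nat.unpair (n / 4)).2 < n + 5 := lt_of_le_of_lt (Nat.unpair_right_le _) hm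
    match n % 4 with
    | 0 => .pair (ofNatO (Nat.unpair (n / 4)).1) (ofNatO (Nat.unpair (n / 4)).2)
    | 1 => .comp (ofNatO (Nat.unpair (n / 4)).1) (ofNatO (Nat.unpair (n / 4)).2)
    | 2 => .prec (ofNatO (Nat.unpair (n / 4)).1) (ofNatO (Nat.unpair (n / 4)).2)
    | _ => .rfind (ofNatO (n / 4))

theorem ofNatO_surjective : Function.Surjective ofNatO := by
  intro c
  induction c with
  | zero => exact ⟨0, by simp [ofNatO]⟩
  | succ => exact ⟨1, by simp [ofNatO]⟩
  | left => exact ⟨2, by simp [ofNatO]⟩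
  | right => exact ⟨3, by simp [ofNatO]⟩
  | oracle => exact ⟨4, by simp [ofNatO]⟩
  | pair a b iha ihb =>
    obtain ⟨m, rfl⟩ := iha; obtain ⟨k, rfl⟩ := ihb
    refine ⟨4 * Nat.pair m k + 0 + 5, ?_⟩
    have h4 : (4 * Nat.pair m k) % 4 = 0 := by omega
    have h4' : (4 * Nat.pair m k) / 4 = Nat.pair m k := by omega
    simp only [ofNatO, h4, h4', Nat.unpair_pair]
  | comp a b iha ihb =>
    obtain ⟨m, rfl⟩ := iha; obtain ⟨k, rfl⟩ := ihb
    refine ⟨4 * Nat.pair m k + 1 + 5, ?_⟩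
    have h4 : (4 * Nat.pair m k + 1) % 4 = 1 := by omega
    have h4' : (4 * Nat.pair m k + 1) / 4 = Nat.pair m k := by omega
    simp only [ofNatO, h4, h4', Nat.unpair_pair]
  | prec a b iha ihb =>
    obtain ⟨m, rfl⟩ := iha; obtain ⟨k, rfl⟩ := ihb
    refine ⟨4 * Nat.pair m k + 2 + 5, ?_⟩
    have h4 : (4 * Nat.pair m k + 2) % 4 = 2 := by omega
    have h4' : (4 * Nat.pair m k + 2) / 4 = Nat.pair m k := by omega
    simp only [ofNatO, h4, h4', Nat.unpair_pair]
  | rfind a iha =>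
    obtain ⟨m, rfl⟩ := iha
    refine ⟨4 * m + 3 + 5, ?_⟩
    have h4 : (4 * m + 3) % 4 = 3 := by omega
    have h4' : (4 * m + 3) / 4 = m := by omega
    simp only [ofNatO, h4, h4']


theorem chi_empty : chi (∅ : Set ℕ) = fun _ => 0 := by
  funext n; simp [chi]

theorem coe_zero_eq : ((fun _ : ℕ => 0 : ℕ → ℕ) : ℕ →. ℕ) = pure 0 := by
  funext n; rfl

theorem natPartrec_recursiveIn {f : ℕ →. ℕ} (h : Nat.Partrec f) (g : ℕ → ℕ) :
    RecursiveInOracle g f := by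
  induction h with
  | zero => exact .zero
  | succ => exact .succ
  | left => exact .left
  | right => exact .right
  | pair _ _ iha ihb => exact .pair iha ihb
  | comp _ _ iha ihb => exact .comp iha ihb
  | prec _ _ iha ihb => exact .prec iha ihb
  | rfind _ ih => exact .rfind ih

theorem recursiveIn_empty_natPartrec {f : ℕ →. ℕ} (h : RecursiveInOracle (chi ∅) f) :
    Nat.Partrec f := by
  induction h with
  | zero => exact .zero
  | succ => exact .succ
  | left => exact .left
  | right => exact .right
  | oracle => rw [chi_empty, coe_zero_eq]; exact .zero
  | pair _ _ iha ihb => exact .pair iha ihb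
  | comp _ _ iha ihb => exact .comp iha ihb
  | prec _ _ iha ihb => exact .prec iha ihb
  | rfind _ ih => exact .rfind ih

theorem exists_noncomputable : ∃ A : Set ℕ, ¬ TuringRed A ∅ := by
  by_contra h
  push_neg at h
  have hsur : ∀ A : Set ℕ, ∃ c : Nat.Partrec.Code,
      A = {n | 1 ∈ c.eval n} := by
    intro A
    have := recursiveIn_empty_natPartrec (h A)
    obtain ⟨c, hc⟩ := Nat.Partrec.Code.exists_code.1 this
    refine ⟨c, ?_⟩
    ext n
    rw [hc]
    constructor
    · intro hn
      show (1 : ℕ) ∈ ((chi A : ℕ →. ℕ) n)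
      rw [PFun.coe_val]
      simp [chi, hn]
    · intro hn
      have hn' : (1 : ℕ) ∈ ((chi A : ℕ →. ℕ) n) := hn
      rw [PFun.coe_val] at hn'
      have := Part.mem_some_iff.1 hn'
      by_contra hA
      simp [chi, hA] at this
  have hinj : ∃ F : Set ℕ → ℕ, Function.Injective F := by
    have : Countable (Set ℕ) := by
      refine Function.Surjective.countable
        (f := fun c : Nat.Partrec.Code => ({n | 1 ∈ c.eval n} : Set ℕ)) ?_
      intro A
      obtain ⟨c, hc⟩ := hsur A
      exact ⟨c, hc.symm⟩
    exact countable_iff_exists_injective (Set ℕ) |>.1 this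
  obtain ⟨F, hF⟩ := hinj
  exact Function.cantor_injective F hF


section Construction

open Classical

variable (B₀ : Set ℕ)

noncomputable def Cd (d : OCode) : Set ℕ := {n | 1 ∈ oeval (chi B₀) d n}

def Bad (C : Set ℕ) (c : OCode) (σ : List ℕ) : Prop :=
  ∃ τ : List ℕ, ∃ n a : ℕ, a ∈ oeval (listO (ext01 σ τ)) c n ∧ a ≠ chi C n

noncomputable def step (σ : List ℕ) (s : ℕ) : List ℕ :=
  if s % 2 = 0 then
    if h : Bad (Cd B₀ (ofNatO (Nat.unpair (s / 2)).2)) (ofNatO (Nat.unpair (s / 2)).1) σ then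
      ext01 σ (choose h)
    else σ
  else
    σ ++ [if (1 : ℕ) ∈ oeval (chi ∅) (ofNatO (s / 2)) σ.length then 0 else 1]

noncomputable def σseq : ℕ → List ℕ
  | 0 => []
  | s + 1 => step B₀ (σseq s) s

noncomputable def B1 : Set ℕ := {n | ∃ s, (σseq B₀ s).getD n 0 = 1}

theorem prefix_step (σ : List ℕ) (s : ℕ) : σ <+: step B₀ σ s := by
  unfold step
  split
  · split
    · exact List.prefix_append σ _
    · exact List.prefix_rfl
  · exact List.prefix_append σ _

theorem σseq_mono {s t : ℕ} (hst : s ≤ t) : σseq B₀ s <+: σseq B₀ t := by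
  induction t with
  | zero => rw [Nat.le_zero.1 hst]
  | succ t ih =>
    rcases Nat.lt_or_ge s (t+1) with h | h
    · exact (ih (by omega)).trans (prefix_step B₀ _ t)
    · have : s = t + 1 := by omega
      subst this; exact List.prefix_rfl

theorem σseq_entries {s : ℕ} : ∀ x ∈ σseq B₀ s, x ≤ 1 := by
  induction s with
  | zero => intro x hx; simp [σseq] at hx
  | succ s ih =>
    intro x hx
    show x ≤ 1
    unfold σseq step at hx
    split at hx
    · split at hx
      · unfold ext01 at hx
        rcases List.mem_append.1 hx with h | h
        · exact ih x h
        · obtain ⟨y, _, rfl⟩ := List.mem_map.1 h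
          omega
      · exact ih x hx
    · rcases List.mem_append.1 hx with h | h
      · exact ih x h
      · simp only [List.mem_singleton] at h
        subst h
        split <;> omega

theorem getD_agree {s n : ℕ} (hn : n < (σseq B₀ s).length) :
    (σseq B₀ s).getD n 0 = chi (B1 B₀) n := by
  rcases Nat.lt_or_ge ((σseq B₀ s).getD n 0) 1 with h | h
  · have h0 : (σseq B₀ s).getD n 0 = 0 := by omega
    rw [h0]
    have : n ∉ B1 B₀ := by
      rintro ⟨t, ht⟩
      rcases Nat.le_total s t with hst | hst
      · obtain ⟨r, hr⟩ := σseq_mono B₀ hst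
        rw [← hr, List.getD_append _ _ _ _ hn] at ht
        omega
      · obtain ⟨r, hr⟩ := σseq_mono B₀ hst
        rcases Nat.lt_or_ge n (σseq B₀ t).length with h' | h'
        · rw [← hr, List.getD_append _ _ _ _ h'] at h0
          omega
        · rw [List.getD_eq_default _ _ h'] at ht
          omega
    simp [chi, this]
  · have h1 : (σseq B₀ s).getD n 0 = 1 := by
      have hmem := σseq_entries B₀ (s := s) ((σseq B₀ s).get ⟨n, hn⟩) (List.get_mem _ ⟨n, hn⟩)
      have hg : (σseq B₀ s).getD n 0 = (σseq B₀ s).get ⟨n, hn⟩ := by rw [List.getD_eq_getElem (hn := hn)]; rfl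
      omega
    rw [h1]
    have : n ∈ B1 B₀ := ⟨s, h1⟩
    simp [chi, this]

theorem listO_σseq_le (s : ℕ) : OracleLE (listO (σseq B₀ s)) (chi (B1 B₀)) := by
  intro x a ha
  have h : (σseq B₀ s)[x]? = some a := by
    simpa [listO] using ha
  obtain ⟨hlt, hget⟩ := List.getElem?_eq_some_iff.1 h
  rw [mem_coe_iff]
  rw [← getD_agree B₀ hlt, List.getD_eq_getElem (hn := hlt), hget]

theorem listO_map_range (g : ℕ → ℕ) (u : ℕ) :
    listO ((List.range u).map g) = resO g u := by
  funext x
  simp only [listO, resO, List.getElem?_map]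
  rcases Nat.lt_or_ge x u with h | h
  · rw [List.getElem?_range h, if_pos h]
    rfl
  · rw [List.getElem?_eq_none (by simpa using h), if_neg (by omega)]
    rfl

theorem trace_decomp (s u : ℕ) (hu : (σseq B₀ s).length ≤ u) :
    (List.range u).map (chi (B1 B₀)) =
      ext01 (σseq B₀ s) (((List.range (u - (σseq B₀ s).length)).map
        (fun j => chi (B1 B₀) ((σseq B₀ s).length + j)))) := by
  set σ := σseq B₀ s with hσ
  set L := σ.length
  have hchi : ∀ m, chi (B1 B₀) m ≤ 1 := by
    intro m; unfold chi; split <;> omega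
  have h1 : ext01 σ (((List.range (u - L)).map (fun j => chi (B1 B₀) (L + j)))) =
      σ ++ (List.range (u - L)).map (fun j => chi (B1 B₀) (L + j)) := by
    unfold ext01
    congr 1
    rw [List.map_map]
    refine List.map_congr_left fun j _ => ?_
    simp only [Function.comp]
    have := hchi (L + j)
    omega
  rw [h1]
  have h2 : u = L + (u - L) := by omega
  rw [h2, List.range_add, List.map_append, List.map_map]
  have h3 : L + (u - L) - L = u - L := by omega
  rw [h3]
  congr 1
  · -- map chi (range L) = σ
    refine List.ext_get (by simp [L]) fun n h₁ h₂ => ?_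
    simp only [List.get_eq_getElem, List.getElem_map]
    have hn : n < L := by simpa using h₂
    have := getD_agree B₀ (s := s) (n := n) hn
    rw [List.getD_eq_getElem (hn := hn)] at this
    simp only [List.getElem_range]
    exact this.symm


theorem B1_not_computable : ¬ RecursiveInOracle (chi ∅) (chi (B1 B₀)) := by
  intro h
  obtain ⟨c, hc⟩ := recursiveIn_iff.1 h
  obtain ⟨k, rfl⟩ := ofNatO_surjective c
  set s := 2 * k + 1 with hs
  set σ := σseq B₀ s with hσ
  have hstep : σseq B₀ (s+1) =
      σ ++ [if (1:ℕ) ∈ oeval (chi ∅) (ofNatO k) σ.length then 0 else 1] := by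
    show step B₀ σ s = _
    unfold step
    have e2 : s / 2 = k := by omega
    rw [if_neg (by omega), e2]
  have hn : σ.length < (σseq B₀ (s+1)).length := by
    rw [hstep]; simp
  have hchi : chi (B1 B₀) σ.length =
      (if (1:ℕ) ∈ oeval (chi ∅) (ofNatO k) σ.length then 0 else 1) := by
    rw [← getD_agree B₀ hn, hstep, List.getD_append_right σ _ 0 σ.length le_rfl]
    simp
  have hmem : chi (B1 B₀) σ.length ∈ oeval (chi ∅) (ofNatO k) σ.length := by
    rw [hc]; exact mem_coe_iff.2 rfl
  by_cases h1 : (1:ℕ) ∈ oeval (chi ∅) (ofNatO k) σ.length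
  · rw [if_pos h1] at hchi
    rw [hchi] at hmem
    exact absurd (Part.mem_unique hmem h1) (by omega)
  · rw [if_neg h1] at hchi
    rw [hchi] at hmem
    exact h1 hmem

theorem minimal_pair {C : Set ℕ} (h0 : RecursiveInOracle (chi B₀) (chi C))
    (h1 : RecursiveInOracle (chi (B1 B₀)) (chi C)) : RecursiveInOracle (chi ∅) (chi C) := by
  obtain ⟨d, hd⟩ := recursiveIn_iff.1 h0
  obtain ⟨c, hc⟩ := recursiveIn_iff.1 h1
  obtain ⟨k2, rfl⟩ := ofNatO_surjective d
  obtain ⟨k1, rfl⟩ := ofNatO_surjective c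
  have hCd : Cd B₀ (ofNatO k2) = C := by
    ext n
    simp only [Cd, Set.mem_setOf_eq, hd]
    rw [mem_coe_iff]
    constructor
    · intro h
      by_contra hn
      rw [chi] at h
      simp [hn] at h
    · intro h
      simp [chi, h]
  set s := 2 * Nat.pair k1 k2 with hs
  set σ := σseq B₀ s with hσ
  by_cases hB : Bad (Cd B₀ (ofNatO k2)) (ofNatO k1) σ
  · exfalso
    have hstep : σseq B₀ (s+1) = ext01 σ (choose hB) := by
      show step B₀ σ s = _
      unfold step
      have e2 : s / 2 = Nat.pair k1 k2 := by omega
      rw [if_pos (by omega), e2, Nat.unpair_pair]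
      exact dif_pos hB
    obtain ⟨n, a, hmem, hne⟩ := choose_spec hB
    have hmem' : a ∈ oeval (chi (B1 B₀)) (ofNatO k1) n := by
      refine oeval_mono ?_ _ _ _ hmem
      rw [← hstep]
      exact listO_σseq_le B₀ (s+1)
    rw [hc] at hmem'
    rw [hCd] at hne
    exact hne (mem_coe_iff.1 hmem')
  · have hsound : ∀ (τ : List ℕ) (n a : ℕ),
        a ∈ oeval (listO (ext01 σ τ)) (ofNatO k1) n → a = chi C n := by
      intro τ n a ha
      by_contra hne
      exact hB ⟨τ, n, a, ha, by rw [hCd]; exact hne⟩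
    have hdom : ∀ n, ∃ τ : List ℕ, chi C n ∈ oeval (listO (ext01 σ τ)) (ofNatO k1) n := by
      intro n
      have hmem : chi C n ∈ oeval (chi (B1 B₀)) (ofNatO k1) n := by
        rw [hc]; exact mem_coe_iff.2 rfl
      obtain ⟨u, hu⟩ := oeval_compact (chi (B1 B₀)) _ _ _ hmem
      have hu2 : chi C n ∈ oeval (resO (chi (B1 B₀)) (max u σ.length)) (ofNatO k1) n :=
        oeval_mono (resO_mono _ (le_max_left _ _)) _ _ _ hu
      rw [← listO_map_range] at hu2
      rw [trace_decomp B₀ s (max u σ.length) (le_max_right _ _)] at hu2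
      exact ⟨_, hu2⟩
    exact natPartrec_recursiveIn (search_partrec (ofNatO k1) σ (chi C) hsound hdom) (chi ∅)

end Construction
end KP

/-- There is a problem admitting non-relativized avoidance of 1 cone
but not of 2 cones. -/
theorem stmt5 : ∃ P : Problem, NRAvoidsCones P 1 ∧ ¬ NRAvoidsCones P 2 := by
  classical
  obtain ⟨B₀, hB₀⟩ := KP.exists_noncomputable
  have hB1 : ¬ TuringRed (KP.B1 B₀) ∅ := KP.B1_not_computable B₀
  have hmin : ∀ C, TuringRed C B₀ → TuringRed C (KP.B1 B₀) → TuringRed C ∅ :=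
    fun C h0 h1 => KP.minimal_pair B₀ h0 h1
  refine ⟨⟨{∅}, fun _ Y => Y = B₀ ∨ Y = KP.B1 B₀⟩, ?_, ?_⟩
  · intro B hB X hX hXred
    have hB0 : ¬ TuringRed (B 0) ∅ := hB 0 (by norm_num)
    by_cases h : TuringRed (B 0) B₀
    · refine ⟨KP.B1 B₀, Or.inr rfl, ?_⟩
      intro t ht
      have ht0 : t = 0 := by
        have : (t : ℕ∞) < 1 := ht
        have : t < 1 := by exact_mod_cast this
        omega
      subst ht0
      intro h2
      exact hB0 (hmin _ h h2)
    · refine ⟨B₀, Or.inl rfl, ?_⟩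
      intro t ht
      have ht0 : t = 0 := by
        have : (t : ℕ∞) < 1 := ht
        have : t < 1 := by exact_mod_cast this
        omega
      subst ht0
      exact h
  · intro hN
    obtain ⟨Y, hY, havoid⟩ := hN (fun s => if s = 0 then B₀ else KP.B1 B₀)
      (fun t ht => by
        by_cases h : t = 0
        · subst h; simpa using hB₀
        · simp only [if_neg h]; exact hB1)
      ∅ rfl RecursiveInOracle.oracle
    rcases hY with rfl | rfl
    · have := havoid 0 (by norm_num)
      simp only [if_pos rfl] at this
      exact this RecursiveInOracle.oracle
    · have := havoid 1 (by norm_num)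
      simp only [one_ne_zero, if_neg] at this
      exact this RecursiveInOracle.oracle
end

section
/- Let A ⊆ ℕ be a semi-computable set. Then: (1) A and its complement ℕ∖A form a minimal pair in the enumeration degrees, i.e., every set C with C ≤_e A and C ≤_e ℕ∖A is c.e.; (2) if A is cototal (A ≤_e ℕ∖A), then A is c.e. -/
section Stmt11Aux

open Nat.Partrec.Code

private theorem natPartrec_recursiveIn {g : ℕ → ℕ} {f : ℕ →. ℕ} (h : Nat.Partrec f) :
    RecursiveInOracle g f := by
  induction h with
  | zero => exact RecursiveInOracle.zero
  | succ => exact RecursiveInOracle.succ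
  | left => exact RecursiveInOracle.left
  | right => exact RecursiveInOracle.right
  | pair _ _ ih₁ ih₂ => exact RecursiveInOracle.pair ih₁ ih₂
  | comp _ _ ih₁ ih₂ => exact RecursiveInOracle.comp ih₁ ih₂
  | prec _ _ ih₁ ih₂ => exact RecursiveInOracle.prec ih₁ ih₂
  | rfind _ ih => exact RecursiveInOracle.rfind ih

private theorem chi_empty : ((chi ∅ : ℕ → ℕ) : ℕ →. ℕ) = pure 0 := by
  funext n
  simp [chi]
  rfl

private theorem recursiveIn_empty_partrec {f : ℕ →. ℕ} (h : RecursiveInOracle (chi ∅) f) :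
    Nat.Partrec f := by
  induction h with
  | zero => exact Nat.Partrec.zero
  | succ => exact Nat.Partrec.succ
  | left => exact Nat.Partrec.left
  | right => exact Nat.Partrec.right
  | oracle => rw [chi_empty]; exact Nat.Partrec.zero
  | pair _ _ ih₁ ih₂ => exact Nat.Partrec.pair ih₁ ih₂
  | comp _ _ ih₁ ih₂ => exact Nat.Partrec.comp ih₁ ih₂
  | prec _ _ ih₁ ih₂ => exact Nat.Partrec.prec ih₁ ih₂
  | rfind _ ih => exact Nat.Partrec.rfind ih

private theorem cESet_iff {S : Set ℕ} :
    CESet S ↔ ∃ f : ℕ →. ℕ, Nat.Partrec f ∧ S = f.Dom := by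
  constructor
  · rintro ⟨f, hf, hS⟩; exact ⟨f, recursiveIn_empty_partrec hf, hS⟩
  · rintro ⟨f, hf, hS⟩; exact ⟨f, natPartrec_recursiveIn hf, hS⟩

private theorem cESet_proj {q : ℕ → ℕ → Bool} (hq : Computable₂ q) :
    CESet {n | ∃ w, q n w = true} := by
  refine cESet_iff.2 ⟨fun n => Nat.rfind fun w => Part.some (q n w), ?_, ?_⟩
  · exact Partrec.nat_iff.1 (Partrec.rfind hq.partrec₂)
  · ext n
    show (∃ w, q n w = true) ↔ (Nat.rfind ((fun w => Part.some (q n w)) : ℕ →. Bool)).Dom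
    refine Iff.trans ?_ (Nat.rfind_dom (p := fun w => Part.some (q n w))).symm
    constructor
    · rintro ⟨w, hw⟩
      exact ⟨w, Part.mem_some_iff.2 hw.symm, fun {k} _ => trivial⟩
    · rintro ⟨m, hm, -⟩
      exact ⟨m, (Part.mem_some_iff.1 hm).symm⟩

/-- Bounded universal quantifier as a boolean function. -/
private def bAll (p : ℕ → Bool) (k : ℕ) : Bool :=
  Nat.rec true (fun m ih => ih && p m) k

private theorem bAll_iff (p : ℕ → Bool) (k : ℕ) :
    bAll p k = true ↔ ∀ m < k, p m = true := by
  induction k with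
  | zero => simp [bAll]
  | succ k ih =>
    show (bAll p k && p k) = true ↔ _
    rw [Bool.and_eq_true, ih]
    constructor
    · rintro ⟨h1, h2⟩ m hm
      rcases Nat.lt_succ_iff_lt_or_eq.1 hm with hm | rfl
      · exact h1 m hm
      · exact h2
    · intro h
      exact ⟨fun m hm => h m (hm.trans (Nat.lt_succ_self k)), h k (Nat.lt_succ_self k)⟩

private theorem bAll_computable {α : Type*} [Primcodable α] {p : α → ℕ → Bool}
    (hp : Computable₂ p) : Computable₂ fun a k => bAll (p a) k := by
  have h : Computable fun x : α × ℕ =>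
      Nat.rec (motive := fun _ => Bool) true (fun y IH => IH && p x.1 y) x.2 :=
    Computable.nat_rec Computable.snd (Computable.const true)
      ((Primrec.and.to_comp.comp (Computable.snd.comp Computable.snd)
        (hp.comp (Computable.fst.comp Computable.fst)
          (Computable.fst.comp Computable.snd))).to₂)
  exact h

private theorem primrec_pow : Primrec₂ ((· ^ ·) : ℕ → ℕ → ℕ) :=
  Primrec₂.unpaired'.1 Nat.Primrec.pow

private theorem primrec_testBit : Primrec₂ Nat.testBit := by
  have h : Primrec fun p : ℕ × ℕ => (p.1 / 2 ^ p.2 % 2) == 1 :=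
    Primrec.beq.comp
      (Primrec.nat_mod.comp
        (Primrec.nat_div.comp Primrec.fst (primrec_pow.comp (Primrec.const 2) Primrec.snd))
        (Primrec.const 2))
      (Primrec.const 1)
  exact h.to₂.of_eq fun u a => by
    rw [Nat.testBit_eq_decide_div_mod_eq, Bool.eq_iff_iff]
    simp

private theorem primrec_evalnSome (c : Nat.Partrec.Code) :
    Primrec fun p : ℕ × ℕ => (evaln p.1 c p.2).isSome :=
  Primrec.option_isSome.comp
    (primrec_evaln.comp ((Primrec.fst.pair (Primrec.const c)).pair Primrec.snd))

private theorem enumRed_refl (A : Set ℕ) : EnumRed A A := by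
  refine ⟨{n | ∃ w, (fun x (_ : ℕ) => x.unpair.2 == 2 ^ x.unpair.1) n w = true},
    cESet_proj ?_, ?_⟩
  · exact ((Primrec.beq.comp (Primrec.snd.comp (Primrec.unpair.comp Primrec.fst))
      (primrec_pow.comp (Primrec.const 2)
        (Primrec.fst.comp (Primrec.unpair.comp Primrec.fst)))).to₂).to_comp
  · intro n
    constructor
    · intro hn
      refine ⟨2 ^ n, ⟨0, ?_⟩, ?_⟩
      · simp [Nat.unpair_pair]
      · intro m hm
        have hnm : n = m := by simpa [Nat.testBit_two_pow] using hm
        rwa [← hnm]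
    · rintro ⟨u, ⟨w, hw⟩, hu⟩
      have hu2 : u = 2 ^ n := by simpa [Nat.unpair_pair] using hw
      exact hu n (by simp [hu2, Nat.testBit_two_pow_self])

end Stmt11Aux

open Nat.Partrec.Code in
set_option maxHeartbeats 1000000 in
/-- A semi-computable set forms a minimal pair with its complement in the
enumeration degrees, and is c.e. if it is cototal. -/
theorem stmt11 (A : Set ℕ) (hA : SemiComputable A) :
    (∀ C : Set ℕ, EnumRed C A → EnumRed C Aᶜ → CESet C) ∧ (Cototal A → CESet A) := by
  obtain ⟨g, hgrec, hsel⟩ := hA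
  have hgc : Computable g := Partrec.nat_iff.2 (recursiveIn_empty_partrec hgrec)
  have main : ∀ C : Set ℕ, EnumRed C A → EnumRed C Aᶜ → CESet C := by
    rintro C ⟨W₀, hW₀ce, hW₀⟩ ⟨W₁, hW₁ce, hW₁⟩
    obtain ⟨f₀, hf₀, hW₀d⟩ := cESet_iff.1 hW₀ce
    obtain ⟨f₁, hf₁, hW₁d⟩ := cESet_iff.1 hW₁ce
    obtain ⟨c₀, hc₀⟩ := exists_code.1 hf₀
    obtain ⟨c₁, hc₁⟩ := exists_code.1 hf₁
    -- the selector compatibility check on pairs of finite sets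
    set sOK : ℕ → ℕ → Bool := fun u₀ u₁ =>
      bAll (fun a => bAll (fun b =>
        (!u₀.testBit a) || ((!u₁.testBit b) || (g (Nat.pair a b) == a))) u₁) u₀ with hsOKdef
    have hsOK_iff : ∀ u₀ u₁, sOK u₀ u₁ = true ↔
        ∀ a < u₀, ∀ b < u₁, u₀.testBit a = true → u₁.testBit b = true →
          g (Nat.pair a b) = a := by
      intro u₀ u₁
      simp only [hsOKdef, bAll_iff, Bool.or_eq_true, Bool.not_eq_true', beq_iff_eq]
      constructor
      · intro h a ha b hb ht₀ ht₁
        rcases h a ha b hb with h' | h' | h'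
        · simp [h'] at ht₀
        · simp [h'] at ht₁
        · exact h'
      · intro h a ha b hb
        by_cases ht₀ : u₀.testBit a = true
        · by_cases ht₁ : u₁.testBit b = true
          · exact Or.inr (Or.inr (h a ha b hb ht₀ ht₁))
          · exact Or.inr (Or.inl (Bool.not_eq_true _ ▸ ht₁))
        · exact Or.inl (Bool.not_eq_true _ ▸ ht₀)
    have hsOKc : Computable₂ sOK := by
      have hinner : Computable₂ fun (x : (ℕ × ℕ) × ℕ) (b : ℕ) =>
          (!x.1.1.testBit x.2) || ((!x.1.2.testBit b) || (g (Nat.pair x.2 b) == x.2)) := by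
        have ha : Computable fun y : ((ℕ × ℕ) × ℕ) × ℕ => y.1.2 :=
          Computable.snd.comp Computable.fst
        have hb : Computable fun y : ((ℕ × ℕ) × ℕ) × ℕ => y.2 := Computable.snd
        have hu₀ : Computable fun y : ((ℕ × ℕ) × ℕ) × ℕ => y.1.1.1 :=
          Computable.fst.comp (Computable.fst.comp Computable.fst)
        have hu₁ : Computable fun y : ((ℕ × ℕ) × ℕ) × ℕ => y.1.1.2 :=
          Computable.snd.comp (Computable.fst.comp Computable.fst)
        have ht1 : Computable fun y : ((ℕ × ℕ) × ℕ) × ℕ => !y.1.1.1.testBit y.1.2 :=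
          Primrec.not.to_comp.comp (primrec_testBit.to_comp.comp hu₀ ha)
        have ht2 : Computable fun y : ((ℕ × ℕ) × ℕ) × ℕ => !y.1.1.2.testBit y.2 :=
          Primrec.not.to_comp.comp (primrec_testBit.to_comp.comp hu₁ hb)
        have ht3 : Computable fun y : ((ℕ × ℕ) × ℕ) × ℕ => g (Nat.pair y.1.2 y.2) == y.1.2 :=
          Primrec.beq.to_comp.comp (hgc.comp (Primrec₂.natPair.to_comp.comp ha hb)) ha
        exact (Primrec.or.to_comp.comp ht1 (Primrec.or.to_comp.comp ht2 ht3)).to₂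
      have houter : Computable₂ fun (u : ℕ × ℕ) (a : ℕ) =>
          bAll (fun b => (!u.1.testBit a) || ((!u.2.testBit b) || (g (Nat.pair a b) == a))) u.2 :=
        ((bAll_computable hinner).comp (Computable.id : Computable (@id ((ℕ × ℕ) × ℕ)))
          (Computable.snd.comp Computable.fst)).to₂
      have h : Computable₂ fun (u : ℕ × ℕ) (k : ℕ) =>
          bAll (fun a =>
            bAll (fun b => (!u.1.testBit a) || ((!u.2.testBit b) || (g (Nat.pair a b) == a)))
              u.2) k := bAll_computable houter
      rw [hsOKdef]
      exact (h.comp (Computable.id : Computable (@id (ℕ × ℕ))) Computable.fst).to₂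
    set q : ℕ → ℕ → Bool := fun n w =>
      ((evaln w.unpair.1 c₀ (Nat.pair n w.unpair.2.unpair.1)).isSome &&
       (evaln w.unpair.1 c₁ (Nat.pair n w.unpair.2.unpair.2)).isSome) &&
      sOK w.unpair.2.unpair.1 w.unpair.2.unpair.2 with hqdef
    have hqc : Computable₂ q := by
      rw [hqdef]
      have hk : Computable fun p : ℕ × ℕ => p.2.unpair.1 :=
        (Primrec.fst.comp (Primrec.unpair.comp Primrec.snd)).to_comp
      have hu₀ : Computable fun p : ℕ × ℕ => p.2.unpair.2.unpair.1 :=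
        (Primrec.fst.comp (Primrec.unpair.comp
          (Primrec.snd.comp (Primrec.unpair.comp Primrec.snd)))).to_comp
      have hu₁ : Computable fun p : ℕ × ℕ => p.2.unpair.2.unpair.2 :=
        (Primrec.snd.comp (Primrec.unpair.comp
          (Primrec.snd.comp (Primrec.unpair.comp Primrec.snd)))).to_comp
      have harg₀ : Computable fun p : ℕ × ℕ =>
          ((p.2.unpair.1, c₀), Nat.pair p.1 p.2.unpair.2.unpair.1) :=
        (hk.pair (Computable.const c₀)).pair
          (Primrec₂.natPair.to_comp.comp Computable.fst hu₀)
      have harg₁ : Computable fun p : ℕ × ℕ =>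
          ((p.2.unpair.1, c₁), Nat.pair p.1 p.2.unpair.2.unpair.2) :=
        (hk.pair (Computable.const c₁)).pair
          (Primrec₂.natPair.to_comp.comp Computable.fst hu₁)
      have he₀ : Computable fun p : ℕ × ℕ =>
          (evaln p.2.unpair.1 c₀ (Nat.pair p.1 p.2.unpair.2.unpair.1)).isSome :=
        Primrec.option_isSome.to_comp.comp (primrec_evaln.to_comp.comp harg₀)
      have he₁ : Computable fun p : ℕ × ℕ =>
          (evaln p.2.unpair.1 c₁ (Nat.pair p.1 p.2.unpair.2.unpair.2)).isSome :=
        Primrec.option_isSome.to_comp.comp (primrec_evaln.to_comp.comp harg₁)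
      exact (Primrec.and.to_comp.comp (Primrec.and.to_comp.comp he₀ he₁)
        (hsOKc.comp hu₀ hu₁)).to₂
    have hCeq : C = {n | ∃ w, q n w = true} := by
      ext n
      simp only [Set.mem_setOf_eq]
      constructor
      · intro hn
        obtain ⟨u₀, hu₀W, hu₀A⟩ := (hW₀ n).1 hn
        obtain ⟨u₁, hu₁W, hu₁A⟩ := (hW₁ n).1 hn
        rw [hW₀d] at hu₀W; rw [hW₁d] at hu₁W
        obtain ⟨y₀, hy₀⟩ := Part.dom_iff_mem.1 hu₀W
        obtain ⟨y₁, hy₁⟩ := Part.dom_iff_mem.1 hu₁W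
        rw [← hc₀] at hy₀; rw [← hc₁] at hy₁
        obtain ⟨k₀, hk₀⟩ := evaln_complete.1 hy₀
        obtain ⟨k₁, hk₁⟩ := evaln_complete.1 hy₁
        refine ⟨Nat.pair (max k₀ k₁) (Nat.pair u₀ u₁), ?_⟩
        simp only [hqdef]
        simp only [Nat.unpair_pair, Bool.and_eq_true]
        refine ⟨⟨?_, ?_⟩, ?_⟩
        · exact Option.isSome_iff_exists.2 ⟨y₀, evaln_mono (le_max_left k₀ k₁) hk₀⟩
        · exact Option.isSome_iff_exists.2 ⟨y₁, evaln_mono (le_max_right k₀ k₁) hk₁⟩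
        · rw [hsOK_iff]
          intro a _ b _ ht₀ ht₁
          have haA : a ∈ A := hu₀A a ht₀
          have hbA : b ∉ A := hu₁A b ht₁
          obtain ⟨hor, hmem⟩ := hsel a b
          have hgA : g (Nat.pair a b) ∈ A := hmem (Or.inl haA)
          rcases hor with h | h
          · exact h
          · exact absurd (h ▸ hgA) hbA
      · rintro ⟨w, hw⟩
        simp only [hqdef, Bool.and_eq_true] at hw
        obtain ⟨⟨he₀, he₁⟩, hs⟩ := hw
        set k := w.unpair.1
        set u₀ := w.unpair.2.unpair.1
        set u₁ := w.unpair.2.unpair.2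
        have hu₀W : Nat.pair n u₀ ∈ W₀ := by
          rw [hW₀d]
          obtain ⟨y₀, hy₀⟩ := Option.isSome_iff_exists.1 he₀
          exact Part.dom_iff_mem.2
            ⟨y₀, hc₀ ▸ evaln_sound (hy₀ ▸ rfl : y₀ ∈ evaln k c₀ (Nat.pair n u₀))⟩
        have hu₁W : Nat.pair n u₁ ∈ W₁ := by
          rw [hW₁d]
          obtain ⟨y₁, hy₁⟩ := Option.isSome_iff_exists.1 he₁
          exact Part.dom_iff_mem.2
            ⟨y₁, hc₁ ▸ evaln_sound (hy₁ ▸ rfl : y₁ ∈ evaln k c₁ (Nat.pair n u₁))⟩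
        by_cases hD : ∀ m, u₀.testBit m = true → m ∈ A
        · exact (hW₀ n).2 ⟨u₀, hu₀W, hD⟩
        · push_neg at hD
          obtain ⟨a, ht₀, haA⟩ := hD
          refine (hW₁ n).2 ⟨u₁, hu₁W, ?_⟩
          intro b ht₁
          have halt : a < u₀ :=
            lt_of_lt_of_le (Nat.lt_two_pow_self (n := a)) (Nat.ge_two_pow_of_testBit ht₀)
          have hblt : b < u₁ :=
            lt_of_lt_of_le (Nat.lt_two_pow_self (n := b)) (Nat.ge_two_pow_of_testBit ht₁)
          have hga : g (Nat.pair a b) = a := (hsOK_iff u₀ u₁).1 hs a halt b hblt ht₀ ht₁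
          intro hbA
          obtain ⟨-, hmem⟩ := hsel a b
          exact haA (hga ▸ hmem (Or.inr hbA))
    rw [hCeq]
    exact cESet_proj hqc
  exact ⟨main, fun hcot => main A (enumRed_refl A) hcot⟩
end
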